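/- arXiv:2106.14446 — 6 statements merged into one kernel-verified Lean document; each statement's English description precedes it below -/
import Mathlib

section
/- Let X be a finite set of items all of whose densities are at least ρ ≥ 0, and suppose s(X) > B − s_e for some item e ∉ X with density ρ_e ≤ ρ and size s_e ≤ B. Then for any finite set T of items disjoint from X with s(T) ≤ B − s_e and all densities in T at most ρ, we have v(T) ≤ v(X). -/
/-- If all densities in `X` are at least `ρ ≥ 0`, `s(X) > B − s_e` for an item
`e ∉ X` with `ρ_e ≤ ρ` and `s_e ≤ B`, then for any finite `T` disjoint from `X` with
`s(T) ≤ B − s_e` and all densities in `T` at most `ρ`, `v(T) ≤ v(X)`. -/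
theorem stmt_5 {ι : Type*} (s v : ι → ℝ) (ρ B : ℝ) (hρ : 0 ≤ ρ) (hB : 0 < B)
    (X : Finset ι)
    (hs : ∀ j, 0 < s j) (hv : ∀ j, 0 ≤ v j)
    (hXdense : ∀ j ∈ X, ρ ≤ v j / s j)
    (e : ι) (heX : e ∉ X) (hρe : v e / s e ≤ ρ) (hse : s e ≤ B)
    (hXsize : ∑ j ∈ X, s j > B - s e)
    (T : Finset ι) (hTX : Disjoint T X)
    (hTsize : ∑ j ∈ T, s j ≤ B - s e)
    (hTdense : ∀ j ∈ T, v j / s j ≤ ρ) :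
    ∑ j ∈ T, v j ≤ ∑ j ∈ X, v j := by
  have h1 : ∑ j ∈ T, v j ≤ ρ * ∑ j ∈ T, s j := by
    rw [Finset.mul_sum]
    refine Finset.sum_le_sum fun j hj => ?_
    have := (div_le_iff₀ (hs j)).mp (hTdense j hj)
    linarith
  have h2 : ρ * ∑ j ∈ X, s j ≤ ∑ j ∈ X, v j := by
    rw [Finset.mul_sum]
    refine Finset.sum_le_sum fun j hj => ?_
    have := (le_div_iff₀ (hs j)).mp (hXdense j hj)
    linarith
  nlinarith [mul_le_mul_of_nonneg_left hTsize hρ, mul_le_mul_of_nonneg_left hXsize.le hρ]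
end

section
/- Let X, T₁, T₂ be pairwise disjoint finite sets of items, B > 0 a real. Suppose: (a) v(X) ≥ v(T₁); (b) every item of X has density at least every item of T₂; (c) s(X) + s_e > B for all e ∈ T₂; (d) s(T₁) + s(T₂) ≤ B. Then for every e ∈ T₂, 2·v(X) ≥ v(T₁) + v(T₂ \ {e}) = v((T₁ ∪ T₂) \ {e}). -/
/-- Key 1/2-EF1 inequality: under (a)–(d) below, for every `e ∈ T₂`,
`2·v(X) ≥ v(T₁) + v(T₂ \ {e}) = v((T₁ ∪ T₂) \ {e})`. -/
theorem stmt_6 {ι : Type*} [DecidableEq ι] (s v : ι → ℝ) (B : ℝ) (hB : 0 < B)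
    (X T₁ T₂ : Finset ι)
    (hd1 : Disjoint X T₁) (hd2 : Disjoint X T₂) (hd3 : Disjoint T₁ T₂)
    (hs : ∀ j, 0 < s j) (hv : ∀ j, 0 ≤ v j)
    (ha : ∑ j ∈ X, v j ≥ ∑ j ∈ T₁, v j)
    (hb : ∀ j ∈ X, ∀ e ∈ T₂, v e / s e ≤ v j / s j)
    (hc : ∀ e ∈ T₂, (∑ j ∈ X, s j) + s e > B)
    (hd : (∑ j ∈ T₁, s j) + (∑ j ∈ T₂, s j) ≤ B) :
    ∀ e ∈ T₂,
      2 * ∑ j ∈ X, v j ≥ (∑ j ∈ T₁, v j) + ∑ j ∈ T₂.erase e, v j ∧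
      (∑ j ∈ T₁, v j) + (∑ j ∈ T₂.erase e, v j) = ∑ j ∈ (T₁ ∪ T₂).erase e, v j := by
  intro e he
  have heT1 : e ∉ T₁ := fun h => (Finset.disjoint_left.mp hd3 h) he
  constructor
  · -- key: v(X) ≥ v(T₂ \ {e})
    have key : ∑ j ∈ T₂.erase e, v j ≤ ∑ j ∈ X, v j := by
      rcases Finset.eq_empty_or_nonempty (T₂.erase e) with hE | hE
      · rw [hE, Finset.sum_empty]
        exact Finset.sum_nonneg fun j _ => hv j
      · -- pick the max-density element of T₂ \ {e}
        obtain ⟨m, hm, hmax⟩ := Finset.exists_max_image (T₂.erase e)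
          (fun j => v j / s j) hE
        have hmT2 : m ∈ T₂ := Finset.mem_of_mem_erase hm
        set ρ := v m / s m with hρ
        have hρ0 : 0 ≤ ρ := div_nonneg (hv m) (hs m).le
        -- s(T₂ \ {e}) ≤ B - s e ≤ s(X)
        have hsX : ∑ j ∈ T₂.erase e, s j ≤ ∑ j ∈ X, s j := by
          have h1 : (∑ j ∈ T₂.erase e, s j) + s e = ∑ j ∈ T₂, s j :=
            Finset.sum_erase_add _ _ he
          have h2 : (0:ℝ) ≤ ∑ j ∈ T₁, s j :=
            Finset.sum_nonneg fun j _ => (hs j).le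
          have h3 := hc e he
          linarith
        calc ∑ j ∈ T₂.erase e, v j
            ≤ ∑ j ∈ T₂.erase e, s j * ρ := by
              apply Finset.sum_le_sum
              intro j hj
              have := hmax j hj
              have hsj := hs j
              have : v j / s j ≤ ρ := this
              calc v j = s j * (v j / s j) := by field_simp
                _ ≤ s j * ρ := by
                    exact mul_le_mul_of_nonneg_left this hsj.le
          _ = (∑ j ∈ T₂.erase e, s j) * ρ := by rw [Finset.sum_mul]
          _ ≤ (∑ j ∈ X, s j) * ρ := mul_le_mul_of_nonneg_right hsX hρ0
          _ = ∑ j ∈ X, s j * ρ := by rw [Finset.sum_mul]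
          _ ≤ ∑ j ∈ X, v j := by
              apply Finset.sum_le_sum
              intro j hj
              have hbj : ρ ≤ v j / s j := hb j hj m hmT2
              have hsj := hs j
              calc s j * ρ ≤ s j * (v j / s j) :=
                    mul_le_mul_of_nonneg_left hbj hsj.le
                _ = v j := by field_simp
    linarith
  · rw [Finset.erase_union_distrib, Finset.erase_eq_of_notMem heT1, Finset.sum_union]
    · exact Finset.disjoint_of_subset_right (Finset.erase_subset _ _) hd3
end

section
/- Consider n agents with budgets B_1 ≤ B_2 ≤ ... ≤ B_n and n bundles X_1,...,X_n with level values l(1),...,l(n) satisfying the level invariant (i < j implies l(i) ≤ l(j) ≤ j) and the size invariant (B_{l(i)−1} < s(X_i) ≤ B_{l(i)}, with B_0 = −∞). If for some index ℓ we have s(X_ℓ) + s_g > B_ℓ (for an unallocated item g), ℓ is the largest index with level l(ℓ), and l(ℓ) = ℓ, then there is no permutation σ of {1,...,n} such that s(X_σ⁻¹(i)) + (if σ⁻¹(i)=ℓ then s_g else 0) ≤ B_i for all i; i.e., the configuration {X_1,...,X_ℓ + g,...,X_n} is not feasible. -/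
/-- Under the level and size invariants, if `s(X_ℓ) + s_g > B_ℓ`, `ℓ` is the
largest index with level `l(ℓ)`, and `l(ℓ) = ℓ`, then the configuration
`{X_1, …, X_ℓ + g, …, X_n}` is not feasible (agents are 0-indexed). -/
theorem stmt_7 {ι : Type*} {n : ℕ} (s : ι → ℝ) (hs : ∀ j, 0 < s j)
    (B : Fin n → ℝ) (hB : Monotone B)
    (X : Fin n → Finset ι) (l : Fin n → Fin n)
    (hlev : ∀ i j : Fin n, i ≤ j → l i ≤ l j ∧ l j ≤ j)
    (hup : ∀ i, ∑ j ∈ X i, s j ≤ B (l i))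
    (hlow : ∀ i, (0 : ℕ) < (l i : ℕ) → B ⟨(l i : ℕ) - 1, Nat.lt_of_le_of_lt (Nat.sub_le _ _) (l i).isLt⟩ < ∑ j ∈ X i, s j)
    (ℓ : Fin n) (g : ι)
    (hg : (∑ j ∈ X ℓ, s j) + s g > B ℓ)
    (hlargest : ∀ j : Fin n, ℓ < j → l j ≠ l ℓ)
    (hll : l ℓ = ℓ) :
    ¬ ∃ σ : Equiv.Perm (Fin n), ∀ i : Fin n,
      (∑ j ∈ X (σ.symm i), s j) + (if σ.symm i = ℓ then s g else 0) ≤ B i := by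
  rintro ⟨σ, hσ⟩
  -- every bundle with index ≥ ℓ has "size" > B ℓ
  have hbig : ∀ i : Fin n, ℓ ≤ i →
      B ℓ < (∑ j ∈ X i, s j) + (if i = ℓ then s g else 0) := by
    intro i hi
    rcases eq_or_lt_of_le hi with h | h
    · subst h; simpa using hg
    · have hne : l i ≠ l ℓ := hlargest i h
      have hle : l ℓ ≤ l i := (hlev ℓ i hi).1
      have hlt : (ℓ : Fin n) < l i := by
        rw [hll] at hle hne
        exact lt_of_le_of_ne hle (Ne.symm hne)
      have hpos : (0 : ℕ) < (l i : ℕ) := lt_of_le_of_lt (Nat.zero_le _) hlt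
      have hlow' := hlow i hpos
      have hBle : B ℓ ≤ B ⟨(l i : ℕ) - 1, Nat.lt_of_le_of_lt (Nat.sub_le _ _) (l i).isLt⟩ := by
        apply hB
        have : (ℓ : ℕ) + 1 ≤ (l i : ℕ) := hlt
        exact Nat.le_sub_one_of_lt hlt
      have : i ≠ ℓ := ne_of_gt h
      simp only [this, if_false, add_zero]
      exact lt_of_le_of_lt hBle hlow'
  -- σ maps Ici ℓ into Ioi ℓ
  have hmap : ∀ i ∈ Finset.Ici ℓ, σ i ∈ Finset.Ioi ℓ := by
    intro i hi
    rw [Finset.mem_Ici] at hi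
    rw [Finset.mem_Ioi]
    have h1 := hσ (σ i)
    rw [Equiv.symm_apply_apply] at h1
    have h2 := hbig i hi
    have : B ℓ < B (σ i) := lt_of_lt_of_le h2 h1
    by_contra hle
    push_neg at hle
    exact absurd (hB hle) (not_le_of_gt this)
  have hcard := Finset.card_le_card_of_injOn (fun i => σ i) hmap
    (σ.injective.injOn)
  rw [Fin.card_Ici, Fin.card_Ioi] at hcard
  have := ℓ.isLt
  omega
end

section
/- In an instance with n agents having identical additive valuation v over items, identical budget B, where the allocation (X_1,...,X_n) is built by repeatedly giving the densest feasible unallocated item to an agent whose current bundle has minimum value: at every step of this process, for any two agents i, j, either X_j = ∅ or there exists g ∈ X_j with v(X_i) ≥ v(X_j \ {g}). -/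
/-- Greedy invariant: if the allocation `(X_1, …, X_n)` satisfies the
pairwise-EF1 property and an item `g` (not yet allocated) is added to a bundle `X_k`
of minimum value, then the resulting allocation also satisfies pairwise EF1. -/
theorem stmt_10 {ι : Type*} [DecidableEq ι] {n : ℕ} (v : ι → ℝ) (hv : ∀ j, 0 ≤ v j)
    (X : Fin n → Finset ι)
    (hEF1 : ∀ i j : Fin n, X j = ∅ ∨
      ∃ g ∈ X j, ∑ e ∈ X i, v e ≥ ∑ e ∈ (X j).erase g, v e)
    (k : Fin n) (hmin : ∀ i : Fin n, ∑ e ∈ X k, v e ≤ ∑ e ∈ X i, v e)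
    (g : ι) (hg : ∀ i : Fin n, g ∉ X i) :
    ∀ i j : Fin n,
      Function.update X k (insert g (X k)) j = ∅ ∨
      ∃ e ∈ Function.update X k (insert g (X k)) j,
        ∑ a ∈ Function.update X k (insert g (X k)) i, v a ≥
          ∑ a ∈ (Function.update X k (insert g (X k)) j).erase e, v a := by
  intro i j
  have hle : ∀ m : Fin n, ∑ a ∈ X m, v a ≤ ∑ a ∈ Function.update X k (insert g (X k)) m, v a := by
    intro m
    rcases eq_or_ne m k with rfl | hmk
    · rw [Function.update_self, Finset.sum_insert (hg m)]
      have := hv g; linarith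
    · rw [Function.update_of_ne hmk]
  rcases eq_or_ne j k with rfl | hjk
  · right
    refine ⟨g, by simp [Function.update_self], ?_⟩
    rw [Function.update_self, Finset.erase_insert (hg j)]
    exact le_trans (hmin i) (hle i)
  · rw [Function.update_of_ne hjk]
    rcases hEF1 i j with h | ⟨e, he, hsum⟩
    · exact Or.inl h
    · exact Or.inr ⟨e, he, le_trans hsum (hle i)⟩
end

section
/- Let (X_1,...,X_n) be an allocation of items satisfying: for all i, j, there exists g ∈ X_j with v(X_i) ≥ v(X_j \ {g}) (pairwise EF1), where v is additive. If item g* is added to bundle X_k where v(X_k) = min_i v(X_i), then the new allocation (X_1,...,X_k ∪ {g*},...,X_n) is also pairwise EF1. -/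
/-- If `(X_1, …, X_n)` is pairwise EF1 (identical additive valuation) and an
item `g*` is added to a minimum-value bundle `X_k`, the new allocation is pairwise EF1. -/
theorem stmt_11 {ι : Type*} [DecidableEq ι] {n : ℕ} (v : ι → ℝ) (hv : ∀ j, 0 ≤ v j)
    (X : Fin n → Finset ι)
    (hEF1 : ∀ i j : Fin n, (X j).Nonempty →
      ∃ g ∈ X j, ∑ e ∈ X i, v e ≥ (∑ e ∈ X j, v e) - v g)
    (k : Fin n) (hmin : ∀ i : Fin n, ∑ e ∈ X k, v e ≤ ∑ e ∈ X i, v e)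
    (gstar : ι) (hg : ∀ i : Fin n, gstar ∉ X i) :
    ∀ i j : Fin n,
      (Function.update X k (insert gstar (X k)) j).Nonempty →
      ∃ g ∈ Function.update X k (insert gstar (X k)) j,
        ∑ e ∈ Function.update X k (insert gstar (X k)) i, v e ≥
          (∑ e ∈ Function.update X k (insert gstar (X k)) j, v e) - v g := by
  intro i j hne
  have hsumk : ∑ e ∈ insert gstar (X k), v e = v gstar + ∑ e ∈ X k, v e :=
    Finset.sum_insert (hg k)
  have hi : ∑ e ∈ X k, v e ≤ ∑ e ∈ Function.update X k (insert gstar (X k)) i, v e := by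
    by_cases hik : i = k
    · subst hik
      rw [Function.update_self, hsumk]
      linarith [hv gstar]
    · rw [Function.update_of_ne hik]
      exact hmin i
  by_cases hjk : j = k
  · subst hjk
    refine ⟨gstar, ?_, ?_⟩
    · rw [Function.update_self]; exact Finset.mem_insert_self _ _
    · rw [Function.update_self, hsumk]
      linarith
  · rw [Function.update_of_ne hjk] at hne ⊢
    obtain ⟨g, hgmem, hineq⟩ := hEF1 i j hne
    refine ⟨g, hgmem, ?_⟩
    by_cases hik : i = k
    · subst hik
      rw [Function.update_self, hsumk]
      linarith [hv gstar]
    · rw [Function.update_of_ne hik]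
      exact hineq
end

section
/- Let X be a finite set of items with s(X) ≤ B where every item has size at most B/k⁴ for a real k ≥ 1. Let X' ⊆ X be obtained by removing items of minimum density from X until s(X') ≤ B − s_j for a given item size s_j ≤ B/k⁴. Then v(X') ≥ (1 − 2/k⁴)·v(X). More precisely: if Δ ⊆ X consists of the minimum-density items of X and s(X \ Δ) > (1 − 2/k⁴)·s(X) ≥ 0, and every item in Δ has density at most every item in X \ Δ, then v(X \ Δ) ≥ (s(X \ Δ)/s(X))·v(X) ≥ (1 − 2/k⁴)·v(X). -/
/-- If `Δ ⊆ X` consists of minimum-density items of `X` (every item of `Δ` has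
density at most every item of `X \ Δ`) and `s(X \ Δ) > (1 − 2/k⁴)·s(X) ≥ 0` with `k ≥ 1`,
then `v(X \ Δ) ≥ (s(X \ Δ)/s(X))·v(X) ≥ (1 − 2/k⁴)·v(X)`. -/
theorem stmt_15 {ι : Type*} [DecidableEq ι] (s v : ι → ℝ) (k : ℝ) (hk : 1 ≤ k)
    (X Δ : Finset ι) (hΔX : Δ ⊆ X)
    (hs : ∀ j, 0 < s j) (hv : ∀ j, 0 ≤ v j)
    (hdense : ∀ d ∈ Δ, ∀ a ∈ X \ Δ, v d / s d ≤ v a / s a)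
    (hsize : ∑ j ∈ X \ Δ, s j > (1 - 2 / k ^ 4) * ∑ j ∈ X, s j)
    (hnn : (0 : ℝ) ≤ (1 - 2 / k ^ 4) * ∑ j ∈ X, s j) :
    (∑ j ∈ X \ Δ, v j) ≥ ((∑ j ∈ X \ Δ, s j) / ∑ j ∈ X, s j) * ∑ j ∈ X, v j ∧
    (∑ j ∈ X \ Δ, v j) ≥ (1 - 2 / k ^ 4) * ∑ j ∈ X, v j := by
  have hXne : X.Nonempty := by
    by_contra h
    rw [Finset.not_nonempty_iff_eq_empty] at h
    subst h
    simp at hsize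
  have hsX : 0 < ∑ j ∈ X, s j := Finset.sum_pos (fun j _ => hs j) hXne
  have key : (∑ j ∈ Δ, v j) * (∑ j ∈ X \ Δ, s j)
      ≤ (∑ j ∈ X \ Δ, v j) * (∑ j ∈ Δ, s j) := by
    rw [Finset.sum_mul_sum, Finset.sum_mul_sum, Finset.sum_comm]
    apply Finset.sum_le_sum
    intro a ha
    apply Finset.sum_le_sum
    intro d hd
    have h1 := hdense d hd a ha
    rw [div_le_div_iff₀ (hs d) (hs a)] at h1
    linarith
  have hsplit_s : ∑ j ∈ X, s j = ∑ j ∈ X \ Δ, s j + ∑ j ∈ Δ, s j :=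
    (Finset.sum_sdiff hΔX).symm
  have hsplit_v : ∑ j ∈ X, v j = ∑ j ∈ X \ Δ, v j + ∑ j ∈ Δ, v j :=
    (Finset.sum_sdiff hΔX).symm
  have hvA : 0 ≤ ∑ j ∈ X \ Δ, v j := Finset.sum_nonneg fun j _ => hv j
  have hvX : 0 ≤ ∑ j ∈ X, v j := Finset.sum_nonneg fun j _ => hv j
  have first : (∑ j ∈ X \ Δ, v j) ≥ ((∑ j ∈ X \ Δ, s j) / ∑ j ∈ X, s j) * ∑ j ∈ X, v j := by
    rw [ge_iff_le, div_mul_eq_mul_div, div_le_iff₀ hsX]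
    nlinarith
  refine ⟨first, ?_⟩
  have hratio : (1 - 2 / k ^ 4) ≤ (∑ j ∈ X \ Δ, s j) / ∑ j ∈ X, s j := by
    rw [le_div_iff₀ hsX]; linarith
  calc (1 - 2 / k ^ 4) * ∑ j ∈ X, v j
      ≤ ((∑ j ∈ X \ Δ, s j) / ∑ j ∈ X, s j) * ∑ j ∈ X, v j :=
        mul_le_mul_of_nonneg_right hratio hvX
    _ ≤ ∑ j ∈ X \ Δ, v j := first
end
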